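/- arXiv:0902.2535 — 3 statements merged into one kernel-verified Lean document; each statement's English description precedes it below -/
import Mathlib

section
/- The derivation actions of Π and 2Φ on Φ coincide: Π.Φ = 2(Φ.Φ). -/
open scoped RealInnerProductSpace

noncomputable section

variable {V : Type*} [NormedAddCommGroup V] [InnerProductSpace ℝ V] [FiniteDimensional ℝ V]

/-- The orthogonal projection onto `D`, as a map `V → V`. -/
def projD (D : Submodule ℝ V) (X : V) : V := (D.orthogonalProjectionOnto X : V)

/-- The bilinear form `h(X,Y) = ⟪πX, πY⟫`. -/
def hForm (D : Submodule ℝ V) (X Y : V) : ℝ := ⟪projD D X, projD D Y⟫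

/-- The 2-form `ω(X,Y) = h(JX, Y)`. -/
def omForm (J : V →ₗ[ℝ] V) (D : Submodule ℝ V) (X Y : V) : ℝ := hForm D (J X) Y

/-- The standard Kähler curvature-type tensor `Π` of constant holomorphic sectional curvature. -/
def PiT (J : V →ₗ[ℝ] V) (U Vv W : V) : V :=
  (1/4 : ℝ) • (⟪Vv, W⟫ • U - ⟪U, W⟫ • Vv + ⟪J Vv, W⟫ • J U - ⟪J U, W⟫ • J Vv
    - (2 * ⟪J U, Vv⟫) • J W)

/-- The curvature-type tensor `Φ`. -/
def PhiT (J : V →ₗ[ℝ] V) (D : Submodule ℝ V) (U Vv W : V) : V :=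
  (1/8 : ℝ) • (⟪Vv, W⟫ • projD D U - ⟪U, W⟫ • projD D Vv
    + hForm D Vv W • U - hForm D U W • Vv
    + ⟪J Vv, W⟫ • projD D (J U) - ⟪J U, W⟫ • projD D (J Vv)
    + omForm J D Vv W • J U - omForm J D U W • J Vv
    - (2 * ⟪J U, Vv⟫) • projD D (J W) - (2 * omForm J D U Vv) • J W)

/-- The curvature-type tensor `Ψ(U,V)W = −ω(U,V)·J(πW)`. -/
def PsiT (J : V →ₗ[ℝ] V) (D : Submodule ℝ V) (U Vv W : V) : V :=
  -(omForm J D U Vv) • J (projD D W)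

/-- The derivation action of an endomorphism `A` on a bilinear form `T`. -/
def der2 (A : V → V) (T : V → V → ℝ) (X Y : V) : ℝ := -T (A X) Y - T X (A Y)

/-- The derivation action of an endomorphism `A` on a 4-multilinear form `T`. -/
def der4 (A : V → V) (T : V → V → V → V → ℝ) (X Y Z W : V) : ℝ :=
  -T (A X) Y Z W - T X (A Y) Z W - T X Y (A Z) W - T X Y Z (A W)

/-- The 4-form `S₀(X,Y,Z,W) = ⟪S(X,Y)Z, W⟫` associated with an endomorphism-valued 2-form. -/
def form4 (S : V → V → V → V) (X Y Z W : V) : ℝ := ⟪S X Y Z, W⟫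

/-- The 6-multilinear form `(R.S)(U,V,X,Y,Z,W) = (R(U,V).S₀)(X,Y,Z,W)`. -/
def dotRS (R S : V → V → V → V) (U Vv X Y Z W : V) : ℝ :=
  der4 (R U Vv) (form4 S) X Y Z W

set_option maxHeartbeats 4000000 in
set_option maxRecDepth 40000 in
theorem stmt_4 {V : Type*} [NormedAddCommGroup V] [InnerProductSpace ℝ V]
    [FiniteDimensional ℝ V]
    (J : V →ₗ[ℝ] V) (hJ2 : ∀ X : V, J (J X) = -X)
    (hJg : ∀ X Y : V, ⟪J X, J Y⟫ = ⟪X, Y⟫)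
    (D : Submodule ℝ V) (hD2 : Module.finrank ℝ ↥D = 2)
    (hJD : ∀ X ∈ D, J X ∈ D) :
    ∀ U Vv X Y Z W : V,
      dotRS (PiT J) (PhiT J D) U Vv X Y Z W
        = 2 * dotRS (PhiT J D) (PhiT J D) U Vv X Y Z W := by
  intro U Vv X Y Z W
  -- basic facts about J and the projection
  have jsk : ∀ x y : V, ⟪x, J y⟫ = -⟪J x, y⟫ := by
    intro x y
    have h := hJg x (J y)
    rw [hJ2 y, inner_neg_right] at h
    linarith
  have ppj : ∀ x : V, projD D (projD D x) = projD D x := fun x =>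
    Submodule.starProjection_eq_self_iff.mpr (SetLike.coe_mem _)
  have sa : ∀ x y : V, ⟪projD D x, y⟫ = ⟪x, projD D y⟫ := fun x y =>
    Submodule.inner_starProjection_left_eq_right D x y
  have pj : ∀ x : V, projD D (J x) = J (projD D x) := by
    intro x
    refine Submodule.eq_starProjection_of_mem_orthogonal (hJD _ (SetLike.coe_mem _)) ?_
    rw [← map_sub, Submodule.mem_orthogonal]
    intro u hu
    rw [jsk]
    have h2 := Submodule.sub_starProjection_mem_orthogonal (K := D) x
    rw [Submodule.mem_orthogonal] at h2
    exact neg_eq_zero.mpr (h2 _ (hJD u hu))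
  have pa : ∀ x y : V, projD D (x + y) = projD D x + projD D y := by
    intro x y; simp [projD]
  have psub : ∀ x y : V, projD D (x - y) = projD D x - projD D y := by
    intro x y; simp [projD]
  have pneg : ∀ x : V, projD D (-x) = -projD D x := by
    intro x; simp [projD]
  have psm : ∀ (r : ℝ) (x : V), projD D (r • x) = r • projD D x := by
    intro r x; simp [projD]
  -- canonicalization rules
  have r1 : ∀ x y : V, ⟪projD D x, y⟫ = hForm D x y := by
    intro x y
    show _ = ⟪projD D x, projD D y⟫
    rw [← sa, ppj]
  have r2 : ∀ x y : V, ⟪x, projD D y⟫ = hForm D x y := by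
    intro x y; rw [← sa, r1]
  have r3 : ∀ x y : V, hForm D (projD D x) y = hForm D x y := by
    intro x y; simp only [hForm, ppj]
  have r4 : ∀ x y : V, hForm D x (projD D y) = hForm D x y := by
    intro x y; simp only [hForm, ppj]
  have r5 : ∀ x y : V, hForm D (J x) y = omForm J D x y := fun _ _ => rfl
  have r6 : ∀ x y : V, hForm D x (J y) = -omForm J D x y := by
    intro x y; simp only [hForm, omForm, pj, jsk]
  have r7 : ∀ x y : V, omForm J D (J x) y = -hForm D x y := by
    intro x y; simp only [omForm, hForm, hJ2, pneg, inner_neg_left]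
  have r8 : ∀ x y : V, omForm J D x (J y) = hForm D x y := by
    intro x y; simp only [omForm, hForm, pj, hJg]
  have r9 : ∀ x y : V, omForm J D (projD D x) y = omForm J D x y := by
    intro x y; simp only [omForm, hForm, pj, ppj]
  have r10 : ∀ x y : V, omForm J D x (projD D y) = omForm J D x y := by
    intro x y; simp only [omForm, hForm, ppj]
  have r11 : ∀ x y : V, ⟪J (projD D x), y⟫ = omForm J D x y := by
    intro x y; rw [← pj, r1, r5]
  have r12 : ∀ x y : V, ⟪x, J (projD D y)⟫ = -omForm J D x y := by
    intro x y; rw [jsk, r2, r5]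
  have hS : ∀ x y : V, hForm D x y = hForm D y x := fun x y => real_inner_comm _ _
  have omS : ∀ x y : V, omForm J D x y = -omForm J D y x := by
    intro x y
    show hForm D (J x) y = _
    rw [hS, r6]
  have gJS : ∀ x y : V, ⟪J x, y⟫ = -⟪J y, x⟫ := by
    intro x y; rw [real_inner_comm, jsk]
  -- bilinearity of hForm and omForm
  have hAl : ∀ x y z : V, hForm D (x + y) z = hForm D x z + hForm D y z := by
    intro x y z; simp [hForm, pa, inner_add_left]
  have hSl : ∀ x y z : V, hForm D (x - y) z = hForm D x z - hForm D y z := by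
    intro x y z; simp [hForm, psub, inner_sub_left]
  have hNl : ∀ x z : V, hForm D (-x) z = -hForm D x z := by
    intro x z; simp [hForm, pneg]
  have hMl : ∀ (r : ℝ) (x z : V), hForm D (r • x) z = r * hForm D x z := by
    intro r x z; simp [hForm, psm, real_inner_smul_left]
  have hAr : ∀ x y z : V, hForm D x (y + z) = hForm D x y + hForm D x z := by
    intro x y z; simp [hForm, pa, inner_add_right]
  have hSr : ∀ x y z : V, hForm D x (y - z) = hForm D x y - hForm D x z := by
    intro x y z; simp [hForm, psub, inner_sub_right]
  have hNr : ∀ x z : V, hForm D x (-z) = -hForm D x z := by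
    intro x z; simp [hForm, pneg]
  have hMr : ∀ (r : ℝ) (x z : V), hForm D x (r • z) = r * hForm D x z := by
    intro r x z; simp [hForm, psm, real_inner_smul_right]
  have oAl : ∀ x y z : V, omForm J D (x + y) z = omForm J D x z + omForm J D y z := by
    intro x y z; simp only [omForm, map_add, hAl]
  have oSl : ∀ x y z : V, omForm J D (x - y) z = omForm J D x z - omForm J D y z := by
    intro x y z; simp only [omForm, map_sub, hSl]
  have oNl : ∀ x z : V, omForm J D (-x) z = -omForm J D x z := by
    intro x z; simp only [omForm, map_neg, hNl]
  have oMl : ∀ (r : ℝ) (x z : V), omForm J D (r • x) z = r * omForm J D x z := by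
    intro r x z; simp only [omForm, map_smul, hMl]
  have oAr : ∀ x y z : V, omForm J D x (y + z) = omForm J D x y + omForm J D x z := by
    intro x y z; simp only [omForm, hAr]
  have oSr : ∀ x y z : V, omForm J D x (y - z) = omForm J D x y - omForm J D x z := by
    intro x y z; simp only [omForm, hSr]
  have oNr : ∀ x z : V, omForm J D x (-z) = -omForm J D x z := by
    intro x z; simp only [omForm, hNr]
  have oMr : ∀ (r : ℝ) (x z : V), omForm J D x (r • z) = r * omForm J D x z := by
    intro r x z; simp only [omForm, hMr]
  -- the four derivation identities
  have Eg : ∀ a b : V, ⟪PiT J U Vv a, b⟫ + ⟪a, PiT J U Vv b⟫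
      = 2 * (⟪PhiT J D U Vv a, b⟫ + ⟪a, PhiT J D U Vv b⟫) := by
    intro a b
    simp only [PiT, PhiT]
    simp only [map_add, map_sub, map_neg, map_smul, pa, psub, pneg, psm, pj, ppj, hJ2,
      smul_add, smul_sub, smul_neg, inner_add_left, inner_add_right, inner_sub_left,
      inner_sub_right, inner_neg_left, inner_neg_right, real_inner_smul_left,
      real_inner_smul_right,
      hAl, hSl, hNl, hMl, hAr, hSr, hNr, hMr, oAl, oSl, oNl, oMl, oAr, oSr, oNr, oMr,
      hJg, jsk, r1, r2, r3, r4, r5, r6, r7, r8, r9, r10, r11, r12,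
      hS a U, hS a Vv, hS a b, omS a U, omS a Vv, omS a b, real_inner_comm a U, real_inner_comm a Vv, real_inner_comm a b, gJS a U, gJS a Vv, gJS a b]
    ring
  have Eh : ∀ a b : V, hForm D (PiT J U Vv a) b + hForm D a (PiT J U Vv b)
      = 2 * (hForm D (PhiT J D U Vv a) b + hForm D a (PhiT J D U Vv b)) := by
    intro a b
    simp only [PiT, PhiT]
    simp only [map_add, map_sub, map_neg, map_smul, pa, psub, pneg, psm, pj, ppj, hJ2,
      smul_add, smul_sub, smul_neg, inner_add_left, inner_add_right, inner_sub_left,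
      inner_sub_right, inner_neg_left, inner_neg_right, real_inner_smul_left,
      real_inner_smul_right,
      hAl, hSl, hNl, hMl, hAr, hSr, hNr, hMr, oAl, oSl, oNl, oMl, oAr, oSr, oNr, oMr,
      hJg, jsk, r1, r2, r3, r4, r5, r6, r7, r8, r9, r10, r11, r12,
      hS a U, hS a Vv, hS a b, omS a U, omS a Vv, omS a b, real_inner_comm a U, real_inner_comm a Vv, real_inner_comm a b, gJS a U, gJS a Vv, gJS a b]
    ring
  have EgJ : ∀ a b : V, ⟪J (PiT J U Vv a), b⟫ + ⟪J a, PiT J U Vv b⟫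
      = 2 * (⟪J (PhiT J D U Vv a), b⟫ + ⟪J a, PhiT J D U Vv b⟫) := by
    intro a b
    simp only [PiT, PhiT]
    simp only [map_add, map_sub, map_neg, map_smul, pa, psub, pneg, psm, pj, ppj, hJ2,
      smul_add, smul_sub, smul_neg, inner_add_left, inner_add_right, inner_sub_left,
      inner_sub_right, inner_neg_left, inner_neg_right, real_inner_smul_left,
      real_inner_smul_right,
      hAl, hSl, hNl, hMl, hAr, hSr, hNr, hMr, oAl, oSl, oNl, oMl, oAr, oSr, oNr, oMr,
      hJg, jsk, r1, r2, r3, r4, r5, r6, r7, r8, r9, r10, r11, r12,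
      hS a U, hS a Vv, hS a b, omS a U, omS a Vv, omS a b, real_inner_comm a U, real_inner_comm a Vv, real_inner_comm a b, gJS a U, gJS a Vv, gJS a b]
    ring
  have Eom : ∀ a b : V, omForm J D (PiT J U Vv a) b + omForm J D a (PiT J U Vv b)
      = 2 * (omForm J D (PhiT J D U Vv a) b + omForm J D a (PhiT J D U Vv b)) := by
    intro a b
    simp only [PiT, PhiT]
    simp only [map_add, map_sub, map_neg, map_smul, pa, psub, pneg, psm, pj, ppj, hJ2,
      smul_add, smul_sub, smul_neg, inner_add_left, inner_add_right, inner_sub_left,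
      inner_sub_right, inner_neg_left, inner_neg_right, real_inner_smul_left,
      real_inner_smul_right,
      hAl, hSl, hNl, hMl, hAr, hSr, hNr, hMr, oAl, oSl, oNl, oMl, oAr, oSr, oNr, oMr,
      hJg, jsk, r1, r2, r3, r4, r5, r6, r7, r8, r9, r10, r11, r12,
      hS a U, hS a Vv, hS a b, omS a U, omS a Vv, omS a b, real_inner_comm a U, real_inner_comm a Vv, real_inner_comm a b, gJS a U, gJS a Vv, gJS a b]
    ring
  -- the 4-form Φ₀ as a sum of products of the basic 2-forms
  have fEq : ∀ x y z w : V, form4 (PhiT J D) x y z w =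
      1/8 * (⟪y, z⟫ * hForm D x w - ⟪x, z⟫ * hForm D y w
        + hForm D y z * ⟪x, w⟫ - hForm D x z * ⟪y, w⟫
        + ⟪J y, z⟫ * omForm J D x w - ⟪J x, z⟫ * omForm J D y w
        + omForm J D y z * ⟪J x, w⟫ - omForm J D x z * ⟪J y, w⟫
        - 2 * ⟪J x, y⟫ * omForm J D z w - 2 * omForm J D x y * ⟪J z, w⟫) := by
    intro x y z w
    simp only [form4, PhiT]
    simp only [map_add, map_sub, map_neg, map_smul, pa, psub, pneg, psm, pj, ppj, hJ2,
      smul_add, smul_sub, smul_neg, inner_add_left, inner_add_right, inner_sub_left,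
      inner_sub_right, inner_neg_left, inner_neg_right, real_inner_smul_left,
      real_inner_smul_right,
      hAl, hSl, hNl, hMl, hAr, hSr, hNr, hMr, oAl, oSl, oNl, oMl, oAr, oSr, oNr, oMr,
      hJg, jsk, r1, r2, r3, r4, r5, r6, r7, r8, r9, r10, r11, r12]
    ring
  simp only [dotRS, der4, fEq]
  linear_combination
      (-(1/8 : ℝ) * hForm D X W) * Eg Y Z + (-(1/8 : ℝ) * ⟪Y, Z⟫) * Eh X W
    + ((1/8 : ℝ) * hForm D Y W) * Eg X Z + ((1/8 : ℝ) * ⟪X, Z⟫) * Eh Y W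
    + (-(1/8 : ℝ) * ⟪X, W⟫) * Eh Y Z + (-(1/8 : ℝ) * hForm D Y Z) * Eg X W
    + ((1/8 : ℝ) * ⟪Y, W⟫) * Eh X Z + ((1/8 : ℝ) * hForm D X Z) * Eg Y W
    + (-(1/8 : ℝ) * omForm J D X W) * EgJ Y Z + (-(1/8 : ℝ) * ⟪J Y, Z⟫) * Eom X W
    + ((1/8 : ℝ) * omForm J D Y W) * EgJ X Z + ((1/8 : ℝ) * ⟪J X, Z⟫) * Eom Y W
    + (-(1/8 : ℝ) * ⟪J X, W⟫) * Eom Y Z + (-(1/8 : ℝ) * omForm J D Y Z) * EgJ X W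
    + ((1/8 : ℝ) * ⟪J Y, W⟫) * Eom X Z + ((1/8 : ℝ) * omForm J D X Z) * EgJ Y W
    + ((1/4 : ℝ) * omForm J D Z W) * EgJ X Y + ((1/4 : ℝ) * ⟪J X, Y⟫) * Eom Z W
    + ((1/4 : ℝ) * ⟪J Z, W⟫) * Eom X Y + ((1/4 : ℝ) * omForm J D X Y) * EgJ Z W
end
end

section
/- For all U, V ∈ V, the derivation actions of the endomorphisms Π(U,V) and 2Φ(U,V) agree on the bilinear form ω: (Π(U,V)).ω = 2(Φ(U,V)).ω. -/
open scoped RealInnerProductSpace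

noncomputable section

variable {V : Type*} [NormedAddCommGroup V] [InnerProductSpace ℝ V] [FiniteDimensional ℝ V]

theorem stmt_7 {V : Type*} [NormedAddCommGroup V] [InnerProductSpace ℝ V]
    [FiniteDimensional ℝ V]
    (J : V →ₗ[ℝ] V) (hJ2 : ∀ X : V, J (J X) = -X)
    (hJg : ∀ X Y : V, ⟪J X, J Y⟫ = ⟪X, Y⟫)
    (D : Submodule ℝ V) (hD2 : Module.finrank ℝ ↥D = 2)
    (hJD : ∀ X ∈ D, J X ∈ D) :
    ∀ U Vv X Y : V,
      der2 (PiT J U Vv) (omForm J D) X Y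
        = 2 * der2 (PhiT J D U Vv) (omForm J D) X Y := by
    -- basic properties of the projection
  have p_mem : ∀ x : V, projD D x ∈ D := fun x => (D.orthogonalProjectionOnto x).2
  have p_add : ∀ x y : V, projD D (x + y) = projD D x + projD D y := by
    intro x y; simp [projD]
  have p_sub : ∀ x y : V, projD D (x - y) = projD D x - projD D y := by
    intro x y; simp [projD]
  have p_smul : ∀ (r : ℝ) (x : V), projD D (r • x) = r • projD D x := by
    intro r x; simp [projD]
  have p_neg : ∀ x : V, projD D (-x) = -projD D x := by
    intro x; simp [projD]
  have p_idem : ∀ x : V, projD D (projD D x) = projD D x := by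
    intro x
    simpa [projD] using
      congrArg (Subtype.val) (Submodule.orthogonalProjectionOnto_mem_subspace_eq_self (D.orthogonalProjectionOnto x))
  have p_left : ∀ x y : V, ⟪x, projD D y⟫ = ⟪projD D x, y⟫ := by
    intro x y; simp only [projD]; exact (Submodule.inner_starProjection_left_eq_right D x y).symm
  have hJperp : ∀ w ∈ Dᗮ, J w ∈ Dᗮ := by
    intro w hw d hd
    have : ⟪J d, J (J w)⟫ = ⟪d, J w⟫ := hJg d (J w)
    rw [hJ2, inner_neg_right] at this
    have h0 : ⟪J d, w⟫ = 0 := real_inner_comm w (J d) ▸ hw (J d) (hJD d hd)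
    linarith [this, h0]
  have pJ : ∀ x : V, projD D (J x) = J (projD D x) := by
    intro x
    refine Submodule.eq_starProjection_of_mem_orthogonal (hJD _ (p_mem x)) ?_
    rw [show J x - J (projD D x) = J (x - projD D x) by rw [map_sub]]
    exact hJperp _ (Submodule.sub_starProjection_mem_orthogonal (K := D) x)
  -- move J to the left of inner products
  have Jright : ∀ x y : V, ⟪x, J y⟫ = -⟪J x, y⟫ := by
    intro x y
    have := hJg x (J y)
    rw [hJ2, inner_neg_right] at this
    linarith
  intro U Vv X Y
  -- symmetry facts
  have hP : ∀ a b : V, ⟪projD D a, b⟫ = ⟪projD D b, a⟫ := by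
    intro a b; rw [← p_left, real_inner_comm]
  have hQ : ∀ a b : V, ⟪J (projD D a), b⟫ = -⟪J (projD D b), a⟫ := by
    intro a b
    rw [real_inner_comm, Jright, p_left, pJ]
  simp only [der2, PiT, PhiT, omForm, hForm]
  simp only [map_add, map_sub, map_smul, map_neg, p_add, p_sub, p_smul, p_neg, pJ, p_idem, hJ2,
    inner_add_left, inner_add_right, inner_sub_left, inner_sub_right, inner_neg_left,
    inner_neg_right, real_inner_smul_left, real_inner_smul_right, hJg, Jright, p_left, smul_neg,
    neg_neg, smul_smul]
  ring_nf
  simp only [hP X U, hP Y U, hP Y Vv, hP X Vv, hP Y X, hQ X U, hQ Y U, hQ Y Vv, hQ X Vv, hQ Y X]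
  ring
end
end

section
/- The tensors Π and Φ satisfy the relation 2(Φ.Φ) = Φ.Π + Π.Φ. -/
open scoped RealInnerProductSpace

noncomputable section

variable {V : Type*} [NormedAddCommGroup V] [InnerProductSpace ℝ V] [FiniteDimensional ℝ V]

section AuxLemmas

set_option linter.unusedSectionVars false
set_option maxHeartbeats 1200000

lemma projD_add' (D : Submodule ℝ V) (a b : V) : projD D (a + b) = projD D a + projD D b := by simp [projD]
lemma projD_smul' (D : Submodule ℝ V) (c : ℝ) (a : V) : projD D (c • a) = c • projD D a := by simp [projD]
lemma projD_sub' (D : Submodule ℝ V) (a b : V) : projD D (a - b) = projD D a - projD D b := by simp [projD]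
lemma projD_neg' (D : Submodule ℝ V) (a : V) : projD D (-a) = -projD D a := by simp [projD]
lemma projD_idem' (D : Submodule ℝ V) (a : V) : projD D (projD D a) = projD D a := by
  simp only [projD, Submodule.orthogonalProjectionOnto_mem_subspace_eq_self]
lemma inner_projD_right' (D : Submodule ℝ V) (a b : V) : ⟪a, projD D b⟫ = ⟪projD D a, b⟫ :=
  by simp only [projD, ← Submodule.starProjection_apply]; exact (Submodule.inner_starProjection_left_eq_right D a b).symm

lemma inner_J_right' (J : V →ₗ[ℝ] V) (hJ2 : ∀ X : V, J (J X) = -X)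
    (hJg : ∀ X Y : V, ⟪J X, J Y⟫ = ⟪X, Y⟫) (a b : V) : ⟪a, J b⟫ = -⟪J a, b⟫ := by
  have h := hJg (J a) b
  rw [hJ2 a] at h
  simp only [inner_neg_left] at h
  linarith

lemma J_projD' (D : Submodule ℝ V) (J : V →ₗ[ℝ] V) (hJ2 : ∀ X : V, J (J X) = -X)
    (hJg : ∀ X Y : V, ⟪J X, J Y⟫ = ⟪X, Y⟫) (hJD : ∀ X ∈ D, J X ∈ D) (a : V) :
    J (projD D a) = projD D (J a) := by
  symm
  rw [projD, ← Submodule.starProjection_apply]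
  apply Submodule.eq_starProjection_of_mem_of_inner_eq_zero
  · exact hJD _ (by simp [projD, Submodule.coe_mem])
  · intro w hw
    have h1 : J a - J (projD D a) = J (a - projD D a) := by rw [map_sub]
    rw [h1]
    have h2 : ⟪J (a - projD D a), w⟫ = -⟪a - projD D a, J w⟫ := by
      rw [real_inner_comm, inner_J_right' J hJ2 hJg, real_inner_comm]
    rw [h2]
    have h3 := Submodule.starProjection_inner_eq_zero a (J w) (hJD w hw)
    rw [Submodule.starProjection_apply] at h3
    simp only [projD] at *
    rw [h3]; ring

lemma skewJ' (J : V →ₗ[ℝ] V) (hJ2 : ∀ X : V, J (J X) = -X)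
    (hJg : ∀ X Y : V, ⟪J X, J Y⟫ = ⟪X, Y⟫) (z w : V) : ⟪J z, w⟫ = -⟪J w, z⟫ := by
  rw [real_inner_comm, inner_J_right' J hJ2 hJg]

lemma skewPJ' (D : Submodule ℝ V) (J : V →ₗ[ℝ] V) (hJ2 : ∀ X : V, J (J X) = -X)
    (hJg : ∀ X Y : V, ⟪J X, J Y⟫ = ⟪X, Y⟫) (hJD : ∀ X ∈ D, J X ∈ D) (z w : V) :
    ⟪projD D (J z), w⟫ = -⟪projD D (J w), z⟫ := by
  rw [← J_projD' D J hJ2 hJg hJD, skewJ' J hJ2 hJg, inner_projD_right']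

lemma hB_skew' (J : V →ₗ[ℝ] V) (hJ2 : ∀ X : V, J (J X) = -X)
    (hJg : ∀ X Y : V, ⟪J X, J Y⟫ = ⟪X, Y⟫) (U Vv z w : V) :
    ⟪PiT J U Vv z, w⟫ = -⟪z, PiT J U Vv w⟫ := by
  rw [show ⟪z, PiT J U Vv w⟫ = ⟪PiT J U Vv w, z⟫ from real_inner_comm _ _]
  simp only [PiT, inner_add_left, inner_sub_left, real_inner_smul_left]
  linear_combination (-(1/2) * ⟪J U, Vv⟫) * skewJ' J hJ2 hJg z w

lemma hA_skew' (D : Submodule ℝ V) (J : V →ₗ[ℝ] V) (hJ2 : ∀ X : V, J (J X) = -X)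
    (hJg : ∀ X Y : V, ⟪J X, J Y⟫ = ⟪X, Y⟫) (hJD : ∀ X ∈ D, J X ∈ D) (U Vv z w : V) :
    ⟪PhiT J D U Vv z, w⟫ = -⟪z, PhiT J D U Vv w⟫ := by
  rw [show ⟪z, PhiT J D U Vv w⟫ = ⟪PhiT J D U Vv w, z⟫ from real_inner_comm _ _]
  simp only [PhiT, hForm, omForm, inner_add_left, inner_sub_left, real_inner_smul_left,
    inner_projD_right', projD_idem']
  linear_combination (-(1/4) * ⟪J U, Vv⟫) * skewPJ' D J hJ2 hJg hJD z w
    + (-(1/4) * ⟪projD D (J U), Vv⟫) * skewJ' J hJ2 hJg z w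

lemma hBJ' (J : V →ₗ[ℝ] V) (hJ2 : ∀ X : V, J (J X) = -X)
    (hJg : ∀ X Y : V, ⟪J X, J Y⟫ = ⟪X, Y⟫) (U Vv x : V) :
    J (PiT J U Vv x) = PiT J U Vv (J x) := by
  simp only [PiT, map_smul, map_add, map_sub, hJ2, hJg, inner_J_right' J hJ2 hJg,
    inner_neg_left, neg_smul, smul_neg]
  module

lemma hAJ' (D : Submodule ℝ V) (J : V →ₗ[ℝ] V) (hJ2 : ∀ X : V, J (J X) = -X)
    (hJg : ∀ X Y : V, ⟪J X, J Y⟫ = ⟪X, Y⟫) (hJD : ∀ X ∈ D, J X ∈ D) (U Vv x : V) :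
    J (PhiT J D U Vv x) = PhiT J D U Vv (J x) := by
  simp only [PhiT, hForm, omForm, map_smul, map_add, map_sub, map_neg,
    J_projD' D J hJ2 hJg hJD, projD_neg', hJ2, hJg, inner_projD_right', projD_idem',
    inner_J_right' J hJ2 hJg, inner_neg_left, neg_smul, smul_neg]
  module

lemma key_comm' (D : Submodule ℝ V) (J : V →ₗ[ℝ] V) (hJ2 : ∀ X : V, J (J X) = -X)
    (hJg : ∀ X Y : V, ⟪J X, J Y⟫ = ⟪X, Y⟫) (hJD : ∀ X ∈ D, J X ∈ D) (U Vv x : V) :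
    (2:ℝ) • projD D (PhiT J D U Vv x) - (2:ℝ) • PhiT J D U Vv (projD D x)
      = projD D (PiT J U Vv x) - PiT J U Vv (projD D x) := by
  simp only [PhiT, PiT, hForm, omForm, projD_add', projD_sub', projD_smul', projD_neg',
    projD_idem', J_projD' D J hJ2 hJg hJD, inner_projD_right', hJ2, hJg,
    inner_J_right' J hJ2 hJg, inner_neg_left, neg_smul, smul_neg, map_smul]
  module

lemma genPi' (J : V →ₗ[ℝ] V) (E : V → V)
    (hsk : ∀ a b : V, ⟪E a, b⟫ = -⟪a, E b⟫)
    (hejr : ∀ a : V, J (E a) = E (J a))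
    (X Y Z W : V) : der4 E (form4 (PiT J)) X Y Z W = 0 := by
  simp only [der4, form4, PiT, inner_add_left, inner_sub_left, real_inner_smul_left,
    hejr, hsk]
  ring

lemma genPhi' (J : V →ₗ[ℝ] V) (D : Submodule ℝ V) (E : V → V)
    (hsk : ∀ a b : V, ⟪E a, b⟫ = -⟪a, E b⟫)
    (hejr : ∀ a : V, J (E a) = E (J a))
    (hep : ∀ a : V, projD D (E a) = E (projD D a))
    (X Y Z W : V) : der4 E (form4 (PhiT J D)) X Y Z W = 0 := by
  simp only [der4, form4, PhiT, hForm, omForm, inner_add_left, inner_sub_left,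
    real_inner_smul_left, hejr, hep, hsk]
  ring

lemma der4_lin' (J : V →ₗ[ℝ] V) (D : Submodule ℝ V) (A B : V → V) (X Y Z W : V) :
    der4 (fun x => (2:ℝ) • A x - B x) (form4 (PhiT J D)) X Y Z W
      = 2 * der4 A (form4 (PhiT J D)) X Y Z W - der4 B (form4 (PhiT J D)) X Y Z W := by
  simp only [der4, form4, PhiT, hForm, omForm, map_sub, map_smul, projD_sub', projD_smul',
    inner_sub_left, inner_sub_right, inner_add_left, inner_add_right,
    real_inner_smul_left, real_inner_smul_right, smul_sub, smul_smul]
  ring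

end AuxLemmas

theorem stmt_11 {V : Type*} [NormedAddCommGroup V] [InnerProductSpace ℝ V]
    [FiniteDimensional ℝ V]
    (J : V →ₗ[ℝ] V) (hJ2 : ∀ X : V, J (J X) = -X)
    (hJg : ∀ X Y : V, ⟪J X, J Y⟫ = ⟪X, Y⟫)
    (D : Submodule ℝ V) (hD2 : Module.finrank ℝ ↥D = 2)
    (hJD : ∀ X ∈ D, J X ∈ D) :
    ∀ U Vv X Y Z W : V,
      2 * dotRS (PhiT J D) (PhiT J D) U Vv X Y Z W
        = dotRS (PhiT J D) (PiT J) U Vv X Y Z W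
          + dotRS (PiT J) (PhiT J D) U Vv X Y Z W := by
  intro U Vv X Y Z W
  have hzero1 : der4 (PhiT J D U Vv) (form4 (PiT J)) X Y Z W = 0 :=
    genPi' J (PhiT J D U Vv) (fun a b => hA_skew' D J hJ2 hJg hJD U Vv a b)
      (fun a => hAJ' D J hJ2 hJg hJD U Vv a) X Y Z W
  have hsk : ∀ a b : V, ⟪(2:ℝ) • PhiT J D U Vv a - PiT J U Vv a, b⟫
      = -⟪a, (2:ℝ) • PhiT J D U Vv b - PiT J U Vv b⟫ := by
    intro a b
    simp only [inner_sub_left, inner_sub_right, real_inner_smul_left, real_inner_smul_right,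
      hA_skew' D J hJ2 hJg hJD U Vv, hB_skew' J hJ2 hJg U Vv]
    ring
  have hejr : ∀ a : V, J ((2:ℝ) • PhiT J D U Vv a - PiT J U Vv a)
      = (2:ℝ) • PhiT J D U Vv (J a) - PiT J U Vv (J a) := by
    intro a
    simp only [map_sub, map_smul, hAJ' D J hJ2 hJg hJD U Vv, hBJ' J hJ2 hJg U Vv]
  have hep : ∀ a : V, projD D ((2:ℝ) • PhiT J D U Vv a - PiT J U Vv a)
      = (2:ℝ) • PhiT J D U Vv (projD D a) - PiT J U Vv (projD D a) := by
    intro a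
    have h := key_comm' D J hJ2 hJg hJD U Vv a
    rw [projD_sub', projD_smul']
    rw [sub_eq_sub_iff_add_eq_add] at h ⊢
    rw [h, add_comm]
  have hzero2 : der4 (fun x => (2:ℝ) • PhiT J D U Vv x - PiT J U Vv x)
      (form4 (PhiT J D)) X Y Z W = 0 :=
    genPhi' J D _ hsk hejr hep X Y Z W
  have hlin := der4_lin' J D (PhiT J D U Vv) (PiT J U Vv) X Y Z W
  simp only [dotRS]
  rw [hzero1]
  rw [hlin] at hzero2
  linarith
end
end
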